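/- Let T be a weighted tree (a connected acyclic graph) with nonzero real edge weights. Then the number of positive eigenvalues of the Laplacian L_T = -B D Bᵀ equals the number of edges of T with negative weight. -/

import Mathlib

open Matrix BigOperators Finset

section auxInertia

variable {V V' : Type*} [AddCommGroup V] [Module ℝ V] [FiniteDimensional ℝ V]
  [AddCommGroup V'] [Module ℝ V'] [FiniteDimensional ℝ V']

omit [FiniteDimensional ℝ V] in
lemma aux_lemA (Q : V → ℝ) (W W' : Submodule ℝ V) [FiniteDimensional ℝ V]
    (hW : ∀ x ∈ W, x ≠ 0 → 0 < Q x)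
    (hW' : ∀ x ∈ W', Q x ≤ 0) :
    Module.finrank ℝ W + Module.finrank ℝ W' ≤ Module.finrank ℝ V := by
  have hdisj : W ⊓ W' = ⊥ := by
    rw [Submodule.eq_bot_iff]
    rintro x ⟨hx, hx'⟩
    by_contra h
    exact absurd (hW' x hx') (not_le.2 (hW x hx h))
  have h1 := Submodule.finrank_sup_add_finrank_inf_eq W W'
  rw [hdisj] at h1
  simp only [finrank_bot, add_zero] at h1
  rw [← h1]
  exact Submodule.finrank_le (W ⊔ W')

lemma aux_count_le (Q : V → ℝ) (Q' : V' → ℝ) (g : V →ₗ[ℝ] V')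
    (hg : ∀ x, Q x = Q' (g x))
    (Wp : Submodule ℝ V) (hWp : ∀ x ∈ Wp, x ≠ 0 → 0 < Q x)
    (Wz : Submodule ℝ V') (hWz : ∀ y ∈ Wz, Q' y ≤ 0)
    (q : ℕ) (hWzrank : Module.finrank ℝ Wz = Module.finrank ℝ V' - q) :
    Module.finrank ℝ Wp ≤ q := by
  set W' := Wp.map g with hW'
  have hWpos : ∀ y ∈ W', y ≠ 0 → 0 < Q' y := by
    rintro y ⟨x, hx, rfl⟩ hy
    have hx0 : x ≠ 0 := by rintro rfl; simp at hy
    have := hWp x hx hx0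
    rwa [hg] at this
  have hrank : Module.finrank ℝ Wp ≤ Module.finrank ℝ W' := by
    have hinj : Function.Injective (g.comp Wp.subtype) := by
      rw [← LinearMap.ker_eq_bot, Submodule.eq_bot_iff]
      intro x hx
      simp only [LinearMap.mem_ker, LinearMap.comp_apply] at hx
      by_contra h
      have hx0 : (x : V) ≠ 0 := fun h0 => h (Subtype.ext h0)
      have := hWp x x.2 hx0
      rw [hg] at this
      rw [show g ((x : V)) = 0 from hx] at this
      have h0 : Q' (0:V') ≤ 0 := hWz 0 Wz.zero_mem
      linarith
    have h1 := LinearMap.finrank_range_of_inj hinj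
    have h2 : LinearMap.range (g.comp Wp.subtype) = W' := by
      rw [LinearMap.range_comp, Submodule.range_subtype]
    rw [h2] at h1
    omega
  have h3 := aux_lemA Q' W' Wz hWpos hWz
  have h4 : Module.finrank ℝ Wz + q ≥ Module.finrank ℝ V' := by
    rcases Nat.le_total q (Module.finrank ℝ V') with h | h
    · omega
    · omega
  omega

end auxInertia

lemma aux_eigen_span {k : ℕ} (M : Matrix (Fin k) (Fin k) ℝ)
    (b : OrthonormalBasis (Fin k) ℝ (EuclideanSpace ℝ (Fin k))) (μ : Fin k → ℝ)
    (hMb : ∀ i, M *ᵥ (b i) = μ i • (b i)) (s : Finset (Fin k)) :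
    ∃ W : Submodule ℝ (EuclideanSpace ℝ (Fin k)), Module.finrank ℝ W = s.card ∧
      ∀ x ∈ W, (x ⬝ᵥ (M *ᵥ x) = ∑ i ∈ s, μ i * (inner (𝕜 := ℝ) (b i) x)^2)
        ∧ (x ≠ 0 → ∃ i ∈ s, (inner (𝕜 := ℝ) (b i) x : ℝ) ≠ 0) := by
  classical
  set v : s → EuclideanSpace ℝ (Fin k) := ⇑b ∘ Subtype.val with hv
  refine ⟨Submodule.span ℝ (Set.range v), ?_, ?_⟩
  · rw [finrank_span_eq_card (b.orthonormal.linearIndependent.comp _ Subtype.val_injective)]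
    exact Fintype.card_coe s
  intro x hx
  have vanish : ∀ j ∉ s, (inner (𝕜 := ℝ) (b j) x : ℝ) = 0 := by
    intro j hj
    refine Submodule.span_induction ?_ ?_ ?_ ?_ hx
    · rintro _ ⟨i, rfl⟩
      exact b.orthonormal.2 (fun h => hj (h ▸ i.2))
    · exact inner_zero_right _
    · intro y z _ _ hy hz; rw [inner_add_right, hy, hz, add_zero]
    · intro a y _ hy; rw [real_inner_smul_right, hy, mul_zero]
  set c : Fin k → ℝ := fun i => inner (𝕜 := ℝ) (b i) x with hc
  have hxr : x = ∑ i, c i • b i := by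
    rw [hc]; exact (b.sum_repr' x).symm
  constructor
  · have hMx : M *ᵥ x = ∑ i, (c i * μ i) • (b i : Fin k → ℝ) := by
      calc M *ᵥ x = M.mulVecLin (∑ i, c i • (b i : Fin k → ℝ)) := by rw [hxr, WithLp.ofLp_sum]; simp only [WithLp.ofLp_smul]; rfl
        _ = ∑ i, c i • (M *ᵥ (b i)) := by rw [map_sum]; simp [Matrix.mulVecLin_apply]
        _ = ∑ i, (c i * μ i) • (b i : Fin k → ℝ) := by
            simp_rw [hMb, smul_smul]
    have hdot : x ⬝ᵥ (M *ᵥ x) = inner (𝕜 := ℝ) x (WithLp.toLp 2 (M *ᵥ x) : EuclideanSpace ℝ (Fin k)) := by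
      simp [dotProduct, PiLp.inner_apply, RCLike.inner_apply, conj_trivial, mul_comm]
    rw [hdot]
    have h5 : (WithLp.toLp 2 (M *ᵥ x) : EuclideanSpace ℝ (Fin k)) = ∑ i, (c i * μ i) • (b i : EuclideanSpace ℝ (Fin k)) := by
      rw [hMx, WithLp.toLp_sum]; simp only [WithLp.toLp_smul, WithLp.toLp_ofLp]
    rw [h5, inner_sum]
    simp_rw [real_inner_smul_right]
    have h6 : ∀ i, (inner (𝕜 := ℝ) x (b i) : ℝ) = c i := fun i => (real_inner_comm x (b i)).symm
    simp_rw [h6]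
    rw [← Finset.sum_subset s.subset_univ]
    · exact Finset.sum_congr rfl (fun i _ => by ring)
    · intro j _ hj; rw [show c j = 0 from vanish j hj]; ring
  · intro hx0
    by_contra h
    push_neg at h
    apply hx0
    rw [hxr]
    apply Finset.sum_eq_zero
    intro i _
    by_cases hi : i ∈ s
    · rw [show c i = 0 from h i hi, zero_smul]
    · rw [show c i = 0 from vanish i hi, zero_smul]

/-- For a weighted tree (connected and acyclic graph) with nonzero edge weights, the number of
positive eigenvalues of the Laplacian `L = -B D Bᵀ` (counted with multiplicity) equals the
number of negatively-weighted edges. -/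
theorem tree_index_eq_neg_edges
    (n m : ℕ) (tail head : Fin m → Fin n) (γ : Fin m → ℝ)
    (hγ : ∀ e, γ e ≠ 0)
    (hloop : ∀ e, tail e ≠ head e)
    (hsimple : ∀ e f : Fin m,
      ({tail e, head e} : Finset (Fin n)) = {tail f, head f} → e = f)
    (hconn : (SimpleGraph.fromRel (fun v w => ∃ e, tail e = v ∧ head e = w)).Connected)
    (hacyc : (SimpleGraph.fromRel (fun v w => ∃ e, tail e = v ∧ head e = w)).IsAcyclic)
    (B : Matrix (Fin n) (Fin m) ℝ)
    (hB : ∀ v e, B v e = if v = tail e then 1 else if v = head e then -1 else 0)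
    (L : Matrix (Fin n) (Fin n) ℝ)
    (hLdef : L = -(B * Matrix.diagonal γ * Bᵀ))
    (hL : L.IsHermitian) :
    (Finset.univ.filter fun i => 0 < hL.eigenvalues i).card
      = (Finset.univ.filter fun e => γ e < 0).card := by
  classical
  -- edge formula for Bᵀ *ᵥ x
  have hedge : ∀ (x : Fin n → ℝ) (e : Fin m),
      (Bᵀ *ᵥ x) e = x (tail e) - x (head e) := by
    intro x e
    simp only [Matrix.mulVec, Matrix.transpose_apply, dotProduct, hB]
    rw [Finset.sum_congr rfl
      (g := fun v => (if v = tail e then x v else 0) + (if v = head e then - x v else 0)) ?_]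
    · rw [Finset.sum_add_distrib, Finset.sum_ite_eq' univ (tail e),
        Finset.sum_ite_eq' univ (head e)]
      simp [sub_eq_add_neg]
    · intro v _
      by_cases h1 : v = tail e
      · have h2 : v ≠ head e := h1 ▸ hloop e
        simp [h1, h2, (hloop e : tail e ≠ head e)]
      · by_cases h2 : v = head e
        · simp [h1, h2, (Ne.symm (hloop e) : head e ≠ tail e)]
        · simp [h1, h2]
  -- the quadratic identity
  set N : Matrix (Fin m) (Fin m) ℝ := Matrix.diagonal (fun e => -γ e) with hN
  have hQ : ∀ x : Fin n → ℝ, x ⬝ᵥ (L *ᵥ x) = (Bᵀ *ᵥ x) ⬝ᵥ (N *ᵥ (Bᵀ *ᵥ x)) := by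
    intro x
    have h1 : L = B * N * Bᵀ := by
      rw [hLdef, hN]
      rw [show Matrix.diagonal (fun e => -γ e) = -Matrix.diagonal γ from
        (Matrix.diagonal_neg γ).symm]
      rw [Matrix.mul_neg, Matrix.neg_mul]
    rw [h1, ← Matrix.mulVec_mulVec, ← Matrix.mulVec_mulVec,
      Matrix.dotProduct_mulVec x B, ← Matrix.mulVec_transpose]
  -- number of edges of a tree
  have hmn : m + 1 = n := by
    set G := SimpleGraph.fromRel (fun v w => ∃ e, tail e = v ∧ head e = w) with hG
    have hT : G.IsTree := ⟨hconn, hacyc⟩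
    have : Fintype G.edgeSet := Fintype.ofFinite _
    have hbij : Function.Bijective (fun e : Fin m =>
        (⟨s(tail e, head e), by
          rw [SimpleGraph.mem_edgeSet, hG, SimpleGraph.fromRel_adj]
          exact ⟨hloop e, Or.inl ⟨e, rfl, rfl⟩⟩⟩ : G.edgeSet)) := by
      constructor
      · intro e f hef
        apply hsimple
        have := Subtype.ext_iff.mp hef
        simp only [Sym2.eq, Sym2.rel_iff', Prod.mk.injEq, Prod.swap_prod_mk] at this
        rcases this with ⟨h1, h2⟩ | ⟨h1, h2⟩
        · rw [h1, h2]
        · rw [h1, h2, Finset.pair_comm]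
      · rintro ⟨z, hz⟩
        induction z with
        | _ v w =>
          rw [SimpleGraph.mem_edgeSet, hG, SimpleGraph.fromRel_adj] at hz
          obtain ⟨hne, ⟨e, he1, he2⟩ | ⟨e, he1, he2⟩⟩ := hz
          · exact ⟨e, by simp [he1, he2]⟩
          · exact ⟨e, by simp [he1, he2, Sym2.eq_swap]⟩
    have hcard : m = Fintype.card G.edgeSet := by
      rw [← Fintype.card_fin m]
      exact Fintype.card_of_bijective hbij
    have := hT.card_edgeFinset
    rw [SimpleGraph.edgeFinset_card, ← hcard, Fintype.card_fin] at this
    exact this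
  -- the linear map x ↦ Bᵀ *ᵥ x, and its surjectivity
  set gB : EuclideanSpace ℝ (Fin n) →ₗ[ℝ] EuclideanSpace ℝ (Fin m) := Matrix.toEuclideanLin Bᵀ with hgB
  obtain ⟨v₀⟩ : Nonempty (Fin n) := hconn.nonempty
  have hconst : ∀ x : Fin n → ℝ, (∀ e, x (tail e) = x (head e)) → ∀ v w, x v = x w := by
    intro x hx v w
    obtain ⟨p⟩ := hconn v w
    induction p with
    | nil => rfl
    | cons h p ih =>
      rw [SimpleGraph.fromRel_adj] at h
      obtain ⟨hne, ⟨e, he1, he2⟩ | ⟨e, he1, he2⟩⟩ := h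
      · rw [← ih, ← he1, ← he2, hx e]
      · rw [← ih, ← he1, ← he2, hx e]
  have hker : LinearMap.ker gB
      = Submodule.span ℝ {(WithLp.toLp 2 (fun _ => (1:ℝ)) : EuclideanSpace ℝ (Fin n))} := by
    apply le_antisymm
    · intro x hx
      rw [LinearMap.mem_ker] at hx
      have hx' : ∀ e, x (tail e) = x (head e) := by
        intro e
        have : (Bᵀ *ᵥ x) e = 0 := congrArg (fun y => y e) hx
        rw [hedge x e] at this
        linarith
      rw [Submodule.mem_span_singleton]
      refine ⟨x v₀, ?_⟩
      ext v
      have := hconst x hx' v v₀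
      show x v₀ * 1 = x v
      rw [mul_one]
      exact this.symm
    · rw [Submodule.span_singleton_le_iff_mem, LinearMap.mem_ker]
      ext e
      show (Bᵀ *ᵥ (fun _ => (1:ℝ))) e = 0
      rw [hedge]
      ring
  have hone_ne : (WithLp.toLp 2 (fun _ => (1:ℝ)) : EuclideanSpace ℝ (Fin n)) ≠ 0 := by
    intro h
    have := congrArg (fun y => y v₀) h
    simp at this
  have hkrank : Module.finrank ℝ (LinearMap.ker gB) = 1 := by
    rw [hker]; exact finrank_span_singleton hone_ne
  have hrange : LinearMap.range gB = ⊤ := by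
    apply Submodule.eq_top_of_finrank_eq
    have h1 := LinearMap.finrank_range_add_finrank_ker gB
    rw [hkrank] at h1
    rw [finrank_euclideanSpace, Fintype.card_fin] at h1
    rw [finrank_euclideanSpace, Fintype.card_fin]
    omega
  obtain ⟨S, hS⟩ := gB.exists_rightInverse_of_surjective hrange
  -- eigen data for L and N
  have hMb : ∀ i, L *ᵥ (hL.eigenvectorBasis i) = hL.eigenvalues i • (hL.eigenvectorBasis i) :=
    fun i => hL.mulVec_eigenvectorBasis i
  set bN : OrthonormalBasis (Fin m) ℝ (EuclideanSpace ℝ (Fin m)) :=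
    EuclideanSpace.basisFun (Fin m) ℝ with hbN
  have hNb : ∀ i, N *ᵥ (bN i) = (-γ i) • (bN i) := by
    intro i
    funext j
    show (N *ᵥ (bN i)) j = ((-γ i) • (bN i : Fin m → ℝ)) j
    rw [hN]
    simp only [Matrix.mulVec_diagonal, hbN, EuclideanSpace.basisFun_apply,
      Pi.smul_apply, smul_eq_mul]
    rw [show ((EuclideanSpace.single i (1:ℝ)) : Fin m → ℝ) j = if j = i then 1 else 0 from
      EuclideanSpace.single_apply i 1 j]
    by_cases h : j = i
    · subst h; simp
    · simp [h]
  -- the four subspaces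
  obtain ⟨WpL, hWpL_rank, hWpL⟩ := aux_eigen_span L hL.eigenvectorBasis hL.eigenvalues hMb
    (Finset.univ.filter fun i => 0 < hL.eigenvalues i)
  obtain ⟨WzL, hWzL_rank, hWzL⟩ := aux_eigen_span L hL.eigenvectorBasis hL.eigenvalues hMb
    (Finset.univ.filter fun i => ¬ 0 < hL.eigenvalues i)
  obtain ⟨WpN, hWpN_rank, hWpN⟩ := aux_eigen_span N bN (fun e => -γ e) hNb
    (Finset.univ.filter fun e => 0 < -γ e)
  obtain ⟨WzN, hWzN_rank, hWzN⟩ := aux_eigen_span N bN (fun e => -γ e) hNb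
    (Finset.univ.filter fun e => ¬ 0 < -γ e)
  -- positivity / nonpositivity on them
  have posOn : ∀ {k : ℕ} (s : Finset (Fin k)) (μ : Fin k → ℝ) (c : Fin k → ℝ),
      (∀ i ∈ s, 0 < μ i) → (∃ i ∈ s, c i ≠ 0) → 0 < ∑ i ∈ s, μ i * (c i)^2 := by
    intro k s μ c hμ ⟨i, hi, hci⟩
    apply Finset.sum_pos'
    · intro j hj
      have := sq_nonneg (c j)
      have := le_of_lt (hμ j hj)
      positivity
    · refine ⟨i, hi, ?_⟩
      have h2 : (0:ℝ) < c i ^ 2 :=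
        lt_of_le_of_ne (sq_nonneg _) (Ne.symm (pow_ne_zero 2 hci))
      exact mul_pos (hμ i hi) h2
  have nonposOn : ∀ {k : ℕ} (s : Finset (Fin k)) (μ : Fin k → ℝ) (c : Fin k → ℝ),
      (∀ i ∈ s, μ i ≤ 0) → ∑ i ∈ s, μ i * (c i)^2 ≤ 0 := by
    intro k s μ c hμ
    apply Finset.sum_nonpos
    intro j hj
    exact mul_nonpos_iff.2 (Or.inr ⟨hμ j hj, sq_nonneg _⟩)
  have hWpL_pos : ∀ x ∈ WpL, x ≠ 0 → 0 < x ⬝ᵥ (L *ᵥ x) := by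
    intro x hx hx0
    obtain ⟨hform, hwit⟩ := hWpL x hx
    rw [hform]
    exact posOn _ _ _ (fun i hi => (Finset.mem_filter.mp hi).2) (hwit hx0)
  have hWzL_nonpos : ∀ x ∈ WzL, x ⬝ᵥ (L *ᵥ x) ≤ 0 := by
    intro x hx
    obtain ⟨hform, _⟩ := hWzL x hx
    rw [hform]
    exact nonposOn _ _ _ (fun i hi => not_lt.mp (Finset.mem_filter.mp hi).2)
  have hWpN_pos : ∀ y ∈ WpN, y ≠ 0 → 0 < y ⬝ᵥ (N *ᵥ y) := by
    intro y hy hy0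
    obtain ⟨hform, hwit⟩ := hWpN y hy
    rw [hform]
    exact posOn _ _ _ (fun i hi => (Finset.mem_filter.mp hi).2) (hwit hy0)
  have hWzN_nonpos : ∀ y ∈ WzN, y ⬝ᵥ (N *ᵥ y) ≤ 0 := by
    intro y hy
    obtain ⟨hform, _⟩ := hWzN y hy
    rw [hform]
    exact nonposOn _ _ _ (fun i hi => not_lt.mp (Finset.mem_filter.mp hi).2)
  -- rank bookkeeping
  have hfiltL := Finset.card_filter_add_card_filter_not
    (s := (Finset.univ : Finset (Fin n))) (p := fun i => 0 < hL.eigenvalues i)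
  rw [Finset.card_univ, Fintype.card_fin] at hfiltL
  have hfiltN := Finset.card_filter_add_card_filter_not
    (s := (Finset.univ : Finset (Fin m))) (p := fun e => 0 < -γ e)
  rw [Finset.card_univ, Fintype.card_fin] at hfiltN
  have hposNeg : (Finset.univ.filter fun e => 0 < -γ e).card
      = (Finset.univ.filter fun e => γ e < 0).card := by
    congr 1
    apply Finset.filter_congr
    intro e _
    simp [neg_pos]
  -- direction 1
  have hd1 : (Finset.univ.filter fun i => 0 < hL.eigenvalues i).card
      ≤ (Finset.univ.filter fun e => γ e < 0).card := by
    rw [← hposNeg, ← hWpL_rank]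
    apply aux_count_le (fun x : EuclideanSpace ℝ (Fin n) => x ⬝ᵥ (L *ᵥ x))
      (fun y : EuclideanSpace ℝ (Fin m) => y ⬝ᵥ (N *ᵥ y)) gB
      (fun x => hQ x) WpL hWpL_pos WzN hWzN_nonpos
    rw [hWzN_rank, finrank_euclideanSpace, Fintype.card_fin]
    omega
  -- direction 2
  have hd2 : (Finset.univ.filter fun e => γ e < 0).card
      ≤ (Finset.univ.filter fun i => 0 < hL.eigenvalues i).card := by
    have hgS : ∀ y : EuclideanSpace ℝ (Fin m), gB (S y) = y := by
      intro y
      have h := LinearMap.ext_iff.mp hS y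
      exact h
    have hQ2 : ∀ y : EuclideanSpace ℝ (Fin m),
        y ⬝ᵥ (N *ᵥ y) = (S y) ⬝ᵥ (L *ᵥ (S y)) := by
      intro y
      rw [hQ (S y)]
      rw [show (Bᵀ *ᵥ (S y : Fin n → ℝ)) = (y : Fin m → ℝ) from congrArg WithLp.ofLp (hgS y)]
    rw [← hposNeg, ← hWpN_rank]
    apply aux_count_le (fun y : EuclideanSpace ℝ (Fin m) => y ⬝ᵥ (N *ᵥ y))
      (fun x : EuclideanSpace ℝ (Fin n) => x ⬝ᵥ (L *ᵥ x)) S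
      hQ2 WpN hWpN_pos WzL hWzL_nonpos
    rw [hWzL_rank, finrank_euclideanSpace, Fintype.card_fin]
    omega
  exact le_antisymm hd1 hd2
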